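/- For α ∈ (0,2] and p > 2, lim_{n→∞} n^{−(p−α)} Σ_{j=0}^{n−1} A_j j^p = α/(p−α), where A_j are the sub-travelling areas of the slicer map S_α. -/

import Mathlib

open Filter Finset Asymptotics

noncomputable def ella (α : ℝ) (m : ℤ) : ℝ :=
  (((|m| : ℤ) : ℝ) + (2:ℝ) ^ (1/α)) ^ (-α)

/-- The sub-travelling areas of the slicer map `S_α` at time `n`. -/
noncomputable def subA (α : ℝ) (n : ℕ) (j : ℤ) : ℝ :=
  if j = 0 ∧ Even n then 2 * (ella α 0 - ella α 1)
  else if 0 < |j| ∧ |j| < (n:ℤ) ∧ j % 2 = (n:ℤ) % 2 then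
    ella α (|j| - 1) - ella α (|j| + 1)
  else 0

/-- increments of the sum -/
noncomputable def dd (α : ℝ) (p : ℕ) (m : ℕ) : ℝ :=
  (ella α ((m:ℤ) - 1) - ella α ((m:ℤ) + 1)) * (m:ℝ)^p

/-- increments of the normalizer -/
noncomputable def bb (α : ℝ) (p : ℕ) (m : ℕ) : ℝ :=
  ((m:ℝ) + 2) ^ ((p:ℝ) - α) - (m:ℝ) ^ ((p:ℝ) - α)

/-- the partial sums -/
noncomputable def FF (α : ℝ) (p : ℕ) (n : ℕ) : ℝ :=
  ∑ j ∈ Finset.range n, subA α n (j:ℤ) * (j:ℝ)^p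

lemma bb_pos {α : ℝ} {p : ℕ} (hq : 0 < (p:ℝ) - α) (m : ℕ) : 0 < bb α p m := by
  have : (m:ℝ) ^ ((p:ℝ) - α) < ((m:ℝ) + 2) ^ ((p:ℝ) - α) :=
    Real.rpow_lt_rpow (by positivity) (by linarith) hq
  simpa [bb] using sub_pos.mpr this

lemma FF_step (α : ℝ) {p : ℕ} (hp : 0 < p) (n : ℕ) :
    FF α p (n + 2) = FF α p n + dd α p n := by
  have hsplit : FF α p (n+2) =
      (∑ j ∈ range n, subA α (n+2) (j:ℤ) * (j:ℝ)^p)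
        + subA α (n+2) (n:ℤ) * (n:ℝ)^p
        + subA α (n+2) ((n+1:ℕ):ℤ) * ((n+1:ℕ):ℝ)^p := by
    rw [FF, Finset.sum_range_succ, Finset.sum_range_succ]
  have hlast : subA α (n+2) ((n+1:ℕ):ℤ) = 0 := by
    rw [subA]
    have h1 : ¬(((n+1:ℕ):ℤ) = 0 ∧ Even (n+2)) := by
      push_cast; intro ⟨h, _⟩; omega
    have h2 : ¬(0 < |((n+1:ℕ):ℤ)| ∧ |((n+1:ℕ):ℤ)| < ((n+2:ℕ):ℤ) ∧
        ((n+1:ℕ):ℤ) % 2 = ((n+2:ℕ):ℤ) % 2) := by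
      rw [abs_of_nonneg (by positivity)]
      push_cast; intro ⟨_, _, h⟩; omega
    rw [if_neg h1, if_neg h2]
  have hmid : subA α (n+2) (n:ℤ) * (n:ℝ)^p = dd α p n := by
    rcases Nat.eq_zero_or_pos n with rfl | hn
    · simp [dd, hp.ne', subA]
    · rw [subA]
      have h1 : ¬(((n:ℕ):ℤ) = 0 ∧ Even (n+2)) := by
        intro ⟨h, _⟩; exact_mod_cast absurd h (by exact_mod_cast hn.ne')
      have h2 : 0 < |((n:ℕ):ℤ)| ∧ |((n:ℕ):ℤ)| < ((n+2:ℕ):ℤ) ∧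
          ((n:ℕ):ℤ) % 2 = ((n+2:ℕ):ℤ) % 2 := by
        rw [abs_of_nonneg (by positivity)]
        push_cast; omega
      rw [if_neg h1, if_pos h2, dd, abs_of_nonneg (by positivity : (0:ℤ) ≤ (n:ℤ))]
  have hsame : ∀ j ∈ range n, subA α (n+2) (j:ℤ) * (j:ℝ)^p = subA α n (j:ℤ) * (j:ℝ)^p := by
    intro j hj
    rw [Finset.mem_range] at hj
    have h1 : (((j:ℕ):ℤ) = 0 ∧ Even (n+2)) ↔ (((j:ℕ):ℤ) = 0 ∧ Even n) := by
      simp [Nat.even_add_one, parity_simps]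
    have h2 : (0 < |((j:ℕ):ℤ)| ∧ |((j:ℕ):ℤ)| < ((n+2:ℕ):ℤ) ∧ ((j:ℕ):ℤ) % 2 = ((n+2:ℕ):ℤ) % 2)
        ↔ (0 < |((j:ℕ):ℤ)| ∧ |((j:ℕ):ℤ)| < ((n:ℕ):ℤ) ∧ ((j:ℕ):ℤ) % 2 = ((n:ℕ):ℤ) % 2) := by
      rw [abs_of_nonneg (by positivity)]
      have : (j:ℤ) < (n:ℤ) := by exact_mod_cast hj
      push_cast
      omega
    rw [subA, subA, if_congr h1 rfl (if_congr h2 rfl rfl)]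
  rw [hsplit, Finset.sum_congr rfl hsame, hlast, hmid, FF]
  ring

lemma FF_parity (α : ℝ) {p : ℕ} (hp : 0 < p) (r : ℕ) (hr : r < 2) (k : ℕ) :
    FF α p (2*k + r) = ∑ i ∈ range k, dd α p (2*i + r) := by
  induction k with
  | zero =>
    interval_cases r
    · simp [FF]
    · simp [FF, subA, hp.ne']
  | succ k ih =>
    have : 2*(k+1) + r = (2*k + r) + 2 := by ring
    rw [this, FF_step α hp, ih, Finset.sum_range_succ]

lemma tendsto_of_even_odd {f : ℕ → ℝ} {L : ℝ}
    (he : Filter.Tendsto (fun k => f (2*k)) atTop (nhds L))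
    (ho : Filter.Tendsto (fun k => f (2*k+1)) atTop (nhds L)) :
    Filter.Tendsto f atTop (nhds L) := by
  rw [Metric.tendsto_atTop] at he ho ⊢
  intro ε hε
  obtain ⟨N1, h1⟩ := he ε hε
  obtain ⟨N2, h2⟩ := ho ε hε
  refine ⟨2*(N1+N2)+2, fun n hn => ?_⟩
  rcases Nat.even_or_odd n with ⟨k, hk⟩ | ⟨k, hk⟩
  · have : n = 2*k := by omega
    rw [this]; exact h1 k (by omega)
  · have : n = 2*k+1 := by omega
    rw [this]; exact h2 k (by omega)

/-- The key analytic lemma. -/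
lemma dd_div_bb_tendsto (α : ℝ) (hα : α ∈ Set.Ioc (0:ℝ) 2) (p : ℕ) (hp2 : 2 < p) :
    Filter.Tendsto (fun m : ℕ => dd α p m / bb α p m) atTop (nhds (α / ((p:ℝ) - α))) := by
  obtain ⟨hα0, hα2⟩ := hα
  set c : ℝ := (2:ℝ) ^ (1/α) with hc
  have hc1 : 1 ≤ c := by
    rw [hc]
    calc (1:ℝ) = (2:ℝ) ^ (0:ℝ) := by rw [Real.rpow_zero]
    _ ≤ (2:ℝ) ^ (1/α) := Real.rpow_le_rpow_of_exponent_le one_le_two (by positivity)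
  set q : ℝ := (p:ℝ) - α with hqdef
  have hq : 0 < q := by
    have : (2:ℝ) < (p:ℝ) := by exact_mod_cast hp2
    simp only [hqdef]; linarith
  set φ : ℝ → ℝ := fun x => (1 + (c-1)*x) ^ (-α) - (1 + (c+1)*x) ^ (-α) with hφdef
  set ψ : ℝ → ℝ := fun x => (1 + 2*x) ^ q - 1 with hψdef
  -- derivatives at 0
  have hder1 : HasDerivAt (fun x : ℝ => (1 + (c-1)*x) ^ (-α)) ((c-1) * (-α)) 0 := by
    have hin : HasDerivAt (fun x : ℝ => 1 + (c-1)*x) (c-1) 0 := by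
      simpa using ((hasDerivAt_id (0:ℝ)).const_mul (c-1)).const_add 1
    have := hin.rpow_const (p := -α) (Or.inl (by norm_num))
    simpa using this
  have hder2 : HasDerivAt (fun x : ℝ => (1 + (c+1)*x) ^ (-α)) ((c+1) * (-α)) 0 := by
    have hin : HasDerivAt (fun x : ℝ => 1 + (c+1)*x) (c+1) 0 := by
      simpa using ((hasDerivAt_id (0:ℝ)).const_mul (c+1)).const_add 1
    have := hin.rpow_const (p := -α) (Or.inl (by norm_num))
    simpa using this
  have hφder : HasDerivAt φ (2*α) 0 := by
    have := hder1.sub hder2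
    rw [show (2*α) = (c-1)*(-α) - (c+1)*(-α) by ring]; exact this
  have hψder : HasDerivAt ψ (2*q) 0 := by
    have hin : HasDerivAt (fun x : ℝ => 1 + 2*x) 2 0 := by
      simpa using ((hasDerivAt_id (0:ℝ)).const_mul 2).const_add 1
    have := (hin.rpow_const (p := q) (Or.inl (by norm_num))).sub_const 1
    rw [show (2*q) = 2*q*(1+2*(0:ℝ))^(q-1) by simp]; exact this
  rw [hasDerivAt_iff_tendsto_slope] at hφder hψder
  -- 1/m tends to 0 within ≠ 0
  have hx : Filter.Tendsto (fun m : ℕ => ((m:ℝ))⁻¹) atTop (nhdsWithin 0 {(0:ℝ)}ᶜ) := by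
    apply tendsto_nhdsWithin_of_tendsto_nhds_of_eventually_within
    · exact tendsto_inv_atTop_zero.comp tendsto_natCast_atTop_atTop
    · filter_upwards [eventually_ge_atTop 1] with m hm
      have : (0:ℝ) < (m:ℝ) := by exact_mod_cast hm
      simp [Set.mem_compl_iff, inv_ne_zero this.ne']
  have hA := hφder.comp hx
  have hB := hψder.comp hx
  have h2q : (2*q) ≠ 0 := by positivity
  have hC := hA.div hB h2q
  have hlim : (2*α) / (2*q) = α / q := by
    rw [mul_div_mul_left _ _ (two_ne_zero)]
  rw [hlim] at hC
  apply hC.congr'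
  filter_upwards [eventually_ge_atTop 1] with m hm
  -- now the computation for m ≥ 1
  have hM : (1:ℝ) ≤ (m:ℝ) := by exact_mod_cast hm
  have hM0 : (0:ℝ) < (m:ℝ) := by linarith
  set x : ℝ := ((m:ℝ))⁻¹ with hxdef
  have hx0 : 0 < x := by positivity
  have hxne : x ≠ 0 := hx0.ne'
  have hφ0 : φ 0 = 0 := by simp [hφdef]
  have hψ0 : ψ 0 = 0 := by simp [hψdef]
  have hslopeφ : (slope φ 0) x = φ x / x := by
    rw [slope_def_field, hφ0, sub_zero, sub_zero]
  have hslopeψ : (slope ψ 0) x = ψ x / x := by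
    rw [slope_def_field, hψ0, sub_zero, sub_zero]
  have hb1 : (0:ℝ) ≤ 1 + (c-1)*x := by
    have : 0 ≤ (c-1)*x := mul_nonneg (by linarith) hx0.le
    linarith
  have hb2 : (0:ℝ) ≤ 1 + (c+1)*x := by
    have : 0 ≤ (c+1)*x := mul_nonneg (by linarith) hx0.le
    linarith
  -- ella values
  have he1 : ella α ((m:ℤ) - 1) = ((m:ℝ) - 1 + c) ^ (-α) := by
    have h1 : (0:ℤ) ≤ (m:ℤ) - 1 := by exact_mod_cast by omega
    rw [ella, abs_of_nonneg h1]
    push_cast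
    rw [← hc]
  have he2 : ella α ((m:ℤ) + 1) = ((m:ℝ) + 1 + c) ^ (-α) := by
    have h1 : (0:ℤ) ≤ (m:ℤ) + 1 := by positivity
    rw [ella, abs_of_nonneg h1]
    push_cast
    rw [← hc]
  -- dd = m^q * φ x
  have hdd : dd α p m = (m:ℝ) ^ q * φ x := by
    have hmx : (m:ℝ)*x = 1 := by rw [hxdef]; exact mul_inv_cancel₀ hM0.ne'
    have e1 : (m:ℝ) - 1 + c = (m:ℝ) * (1 + (c-1)*x) := by
      linear_combination (1-c)*hmx
    have e2 : (m:ℝ) + 1 + c = (m:ℝ) * (1 + (c+1)*x) := by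
      linear_combination (-(c+1))*hmx
    rw [dd, he1, he2, e1, e2, Real.mul_rpow hM0.le hb1, Real.mul_rpow hM0.le hb2]
    rw [← Real.rpow_natCast (m:ℝ) p]
    rw [show ((m:ℝ)^(-α) * (1 + (c-1)*x)^(-α) - (m:ℝ)^(-α) * (1 + (c+1)*x)^(-α)) * (m:ℝ)^(p:ℝ)
        = ((m:ℝ)^(-α) * (m:ℝ)^(p:ℝ)) * φ x by rw [hφdef]; ring]
    rw [← Real.rpow_add hM0]
    ring_nf
    rw [hqdef]; ring_nf
  -- bb = m^q * ψ x
  have hbb : bb α p m = (m:ℝ) ^ q * ψ x := by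
    have hmx : (m:ℝ)*x = 1 := by rw [hxdef]; exact mul_inv_cancel₀ hM0.ne'
    have e3 : (m:ℝ) + 2 = (m:ℝ) * (1 + 2*x) := by
      linear_combination (-2:ℝ)*hmx
    have hb3 : (0:ℝ) ≤ 1 + 2*x := by linarith
    rw [bb, e3, Real.mul_rpow hM0.le hb3, hψdef]
    ring_nf
    rw [hqdef]
  have hmq : ((m:ℝ) ^ q) ≠ 0 := by positivity
  simp only [Pi.div_apply, Function.comp_apply]
  rw [hslopeφ, hslopeψ, hdd, hbb, mul_div_mul_left _ _ hmq, div_div_div_cancel_right₀ hxne]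

lemma parity_limit (α : ℝ) (hα : α ∈ Set.Ioc (0:ℝ) 2) (p : ℕ) (hp2 : 2 < p)
    (r : ℕ) (hr : r < 2) :
    Filter.Tendsto (fun k : ℕ => FF α p (2*k + r) / ((2*k + r:ℕ):ℝ) ^ ((p:ℝ) - α))
      atTop (nhds (α / ((p:ℝ) - α))) := by
  have hp' : 0 < p := by omega
  set q : ℝ := (p:ℝ) - α with hqdef
  set L : ℝ := α / q with hLdef
  have hq : 0 < q := by
    have h1 : (2:ℝ) < (p:ℝ) := by exact_mod_cast hp2
    have h2 := hα.2
    simp only [hqdef]; linarith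
  have h2kr : Filter.Tendsto (fun k : ℕ => 2*k + r) atTop atTop := by
    apply tendsto_atTop_mono (f := fun k : ℕ => k) (fun k => by show k ≤ 2*k+r; omega)
    exact tendsto_id
  have hcomp : Filter.Tendsto (fun k : ℕ => dd α p (2*k+r) / bb α p (2*k+r)) atTop (nhds L) :=
    (dd_div_bb_tendsto α hα p hp2).comp h2kr
  have hbbpos : ∀ k : ℕ, 0 < bb α p (2*k+r) := fun k => bb_pos hq _
  have hlitt : (fun k : ℕ => dd α p (2*k+r) - L * bb α p (2*k+r))
      =o[atTop] (fun k : ℕ => bb α p (2*k+r)) := by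
    rw [isLittleO_iff_tendsto' (by filter_upwards with k h; exact absurd h (hbbpos k).ne')]
    have h0 : Filter.Tendsto (fun k : ℕ => dd α p (2*k+r) / bb α p (2*k+r) - L) atTop
        (nhds (L - L)) := hcomp.sub_const L
    rw [sub_self] at h0
    apply h0.congr
    intro k
    rw [sub_div, mul_div_assoc, div_self (hbbpos k).ne', mul_one]
  have hGsum : ∀ k : ℕ, ∑ i ∈ range k, bb α p (2*i+r)
      = ((2*k + r:ℕ):ℝ) ^ q - ((r:ℕ):ℝ) ^ q := by
    intro k
    have hcongr : ∀ i ∈ range k, bb α p (2*i+r)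
        = (fun i : ℕ => ((2*i + r:ℕ):ℝ) ^ q) (i+1) - (fun i : ℕ => ((2*i + r:ℕ):ℝ) ^ q) i := by
      intro i _
      have e : ((2*i+r:ℕ):ℝ) + 2 = ((2*(i+1)+r:ℕ):ℝ) := by push_cast; ring
      simp only [bb, e]
      rw [hqdef]
    rw [Finset.sum_congr rfl hcongr,
      Finset.sum_range_sub (fun i : ℕ => ((2*i + r:ℕ):ℝ) ^ q) k]
    norm_num
  have hXtop : Filter.Tendsto (fun k : ℕ => ((2*k + r:ℕ):ℝ) ^ q) atTop atTop :=
    (tendsto_rpow_atTop hq).comp (tendsto_natCast_atTop_atTop.comp h2kr)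
  have hGtends : Filter.Tendsto (fun k : ℕ => ∑ i ∈ range k, bb α p (2*i+r)) atTop atTop := by
    have h0 := tendsto_atTop_add_const_right atTop (-(((r:ℕ):ℝ) ^ q)) hXtop
    apply h0.congr
    intro k
    rw [← sub_eq_add_neg, ← hGsum k]
  have hsumo := hlitt.sum_range (fun k => (hbbpos k).le) hGtends
  have hdiv := hsumo.tendsto_div_nhds_zero
  have hFsum : ∀ k : ℕ, ∑ i ∈ range k, (dd α p (2*i+r) - L * bb α p (2*i+r))
      = FF α p (2*k+r) - L * ∑ i ∈ range k, bb α p (2*i+r) := by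
    intro k
    rw [Finset.sum_sub_distrib, ← Finset.mul_sum, FF_parity α hp' r hr]
  have h5 : Filter.Tendsto
      (fun k : ℕ => FF α p (2*k+r) / (∑ i ∈ range k, bb α p (2*i+r))) atTop (nhds L) := by
    have h0 := hdiv.add (tendsto_const_nhds (x := L) (f := atTop))
    rw [zero_add] at h0
    apply h0.congr'
    filter_upwards [eventually_ge_atTop 1] with k hk
    have hG0 : 0 < ∑ i ∈ range k, bb α p (2*i+r) :=
      Finset.sum_pos (fun i _ => hbbpos i) (by simp; omega)
    rw [hFsum k, sub_div, mul_div_assoc, div_self hG0.ne', mul_one, sub_add_cancel]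
  have h6 : Filter.Tendsto
      (fun k : ℕ => (∑ i ∈ range k, bb α p (2*i+r)) / ((2*k + r:ℕ):ℝ) ^ q) atTop (nhds 1) := by
    have h7 : Filter.Tendsto (fun k : ℕ => ((r:ℕ):ℝ) ^ q / ((2*k + r:ℕ):ℝ) ^ q) atTop (nhds 0) :=
      tendsto_const_nhds.div_atTop hXtop
    have h8 := (tendsto_const_nhds (x := (1:ℝ)) (f := atTop)).sub h7
    rw [sub_zero] at h8
    apply h8.congr'
    filter_upwards [eventually_ge_atTop 1] with k hk
    have hX0 : (0:ℝ) < ((2*k + r:ℕ):ℝ) ^ q := by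
      apply Real.rpow_pos_of_pos
      have h9 : (1:ℕ) ≤ 2*k + r := by omega
      exact_mod_cast h9
    rw [hGsum k, sub_div, div_self hX0.ne']
  have hfin := h5.mul h6
  rw [mul_one] at hfin
  apply hfin.congr'
  filter_upwards [eventually_ge_atTop 1] with k hk
  have hG0 : 0 < ∑ i ∈ range k, bb α p (2*i+r) :=
    Finset.sum_pos (fun i _ => hbbpos i) (by simp; omega)
  rw [div_mul_div_comm, mul_comm (FF α p (2*k+r)), mul_div_mul_left _ _ hG0.ne']

/-- for `α ∈ (0,2]` and even `p > 2`,
`lim_{n→∞} n^{-(p-α)} Σ_{j=0}^{n-1} A_j j^p = α/(p-α)`. -/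
theorem subA_moment_limit (α : ℝ) (hα : α ∈ Set.Ioc (0:ℝ) 2)
    (p : ℕ) (hp : Even p) (hp2 : 2 < p) :
    Tendsto (fun n : ℕ =>
        (∑ j ∈ Finset.range n, subA α n (j:ℤ) * (j:ℝ)^p) / (n:ℝ)^((p:ℝ) - α))
      atTop (nhds (α / ((p:ℝ) - α))) := by
  show Filter.Tendsto (fun n : ℕ => FF α p n / (n:ℝ) ^ ((p:ℝ) - α)) atTop _
  apply tendsto_of_even_odd
  · simpa using parity_limit α hα p hp2 0 (by omega)
  · simpa using parity_limit α hα p hp2 1 (by omega)
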